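/- Let R₁,…,R_n, R_{n+1} be exchangeable real-valued random variables (in particular, i.i.d.). Let q̂ be the ⌈(n+1)(1-δ)⌉-th smallest value among R₁,…,R_n, where δ ∈ (0,1) and ⌈(n+1)(1-δ)⌉ ≤ n. Then P(R_{n+1} ≤ q̂) ≥ 1 - δ. -/

import Mathlib

open MeasureTheory
open scoped ENNReal NNReal

/-- The `k`-th smallest element of a list of reals (1-indexed). -/
noncomputable def kthSmallest (l : List ℝ) (k : ℕ) : ℝ :=
  (l.insertionSort (· ≤ ·)).getD (k - 1) 0

/-- For a sorted list, `a ≤ s[m]` iff at most `m` elements are `< a`. -/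
lemma aux_sorted_le_iff {s : List ℝ} (hs : s.Pairwise (· ≤ ·)) {m : ℕ} (hm : m < s.length)
    (a : ℝ) : a ≤ s[m] ↔ s.countP (fun b => decide (b < a)) ≤ m := by
  constructor
  · intro h
    have hsplit : s.countP (fun b => decide (b < a)) =
        (s.take m).countP (fun b => decide (b < a)) +
          (s.drop m).countP (fun b => decide (b < a)) := by
      rw [← List.countP_append, List.take_append_drop]
    have hdrop : (s.drop m).countP (fun b => decide (b < a)) = 0 := by
      rw [List.countP_eq_zero]
      intro b hb
      obtain ⟨j, hj, rfl⟩ := List.mem_iff_getElem.mp hb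
      have hms : m + j < s.length := by
        have := hj; simp only [List.length_drop] at this; omega
      rw [List.getElem_drop]
      have h2 : s[m] ≤ s[m + j] := by
        have := hs.rel_get_of_le (a := ⟨m, hm⟩)
          (b := ⟨m + j, by have := hj; simp [List.length_drop] at this; omega⟩)
          (by simp)
        simpa using this
      simp only [decide_eq_true_eq]
      linarith
    have htake : (s.take m).countP (fun b => decide (b < a)) ≤ m := by
      calc (s.take m).countP (fun b => decide (b < a)) ≤ (s.take m).length :=
            List.countP_le_length
        _ ≤ m := by simp [List.length_take]
    omega
  · intro h
    by_contra hlt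
    push_neg at hlt
    have hm1 : m + 1 ≤ s.length := hm
    have htake : (s.take (m + 1)).countP (fun b => decide (b < a)) = m + 1 := by
      rw [List.countP_eq_length.mpr, List.length_take, min_eq_left hm1]
      intro b hb
      obtain ⟨i, hi, rfl⟩ := List.mem_iff_getElem.mp hb
      have hi' : i < s.length := by
        have := hi; simp [List.length_take] at this; omega
      rw [List.getElem_take]
      have h2 : s[i] ≤ s[m] := by
        have hile : i ≤ m := by
          have := hi; simp [List.length_take] at this; omega
        have := hs.rel_get_of_le (a := ⟨i, hi'⟩) (b := ⟨m, hm⟩) (by simpa using hile)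
        simpa using this
      simp only [decide_eq_true_eq]
      linarith
    have hsplit : s.countP (fun b => decide (b < a)) =
        (s.take (m + 1)).countP (fun b => decide (b < a)) +
          (s.drop (m + 1)).countP (fun b => decide (b < a)) := by
      rw [← List.countP_append, List.take_append_drop]
    omega

lemma aux_countP_eq_sum {α : Type*} (l : List α) (p : α → Bool) :
    l.countP p = (l.map fun a => if p a then (1 : ℕ) else 0).sum := by
  induction l with
  | nil => simp
  | cons a l ih => by_cases h : p a <;> simp [List.countP_cons, ih, h, Nat.add_comm]

lemma aux_countP_ofFn {m : ℕ} (x : Fin m → ℝ) (p : ℝ → Bool) :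
    (List.ofFn x).countP p = ∑ i, if p (x i) then (1 : ℕ) else 0 := by
  rw [aux_countP_eq_sum, List.map_ofFn, List.sum_ofFn]
  rfl

/-- At least `k` elements of a list have strict rank `< k`. -/
lemma aux_key_count (L : List ℝ) (k : ℕ) (hk : 0 < k) (hkL : k ≤ L.length) :
    k ≤ L.countP (fun a => decide (L.countP (fun b => decide (b < a)) < k)) := by
  set s := L.insertionSort (· ≤ ·) with hs
  have hperm : s.Perm L := L.perm_insertionSort (· ≤ ·)
  have hsorted : s.Pairwise (· ≤ ·) := L.pairwise_insertionSort (· ≤ ·)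
  have hlen : s.length = L.length := hperm.length_eq
  have hpred : (fun a => decide (L.countP (fun b => decide (b < a)) < k)) =
      fun a => decide (s.countP (fun b => decide (b < a)) < k) := by
    funext a
    rw [hperm.countP_eq]
  rw [← hperm.countP_eq, hpred]
  have hsplit : s.countP (fun a => decide (s.countP (fun b => decide (b < a)) < k)) =
      (s.take k).countP (fun a => decide (s.countP (fun b => decide (b < a)) < k)) +
        (s.drop k).countP (fun a => decide (s.countP (fun b => decide (b < a)) < k)) := by
    rw [← List.countP_append, List.take_append_drop]
  have htake : (s.take k).countP
      (fun a => decide (s.countP (fun b => decide (b < a)) < k)) = k := by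
    rw [List.countP_eq_length.mpr, List.length_take, min_eq_left (hlen ▸ hkL)]
    intro b hb
    obtain ⟨i, hi, rfl⟩ := List.mem_iff_getElem.mp hb
    have hik : i < k := by
      have := hi; simp [List.length_take] at this; omega
    have hi' : i < s.length := by omega
    rw [List.getElem_take]
    simp only [decide_eq_true_eq]
    have := (aux_sorted_le_iff hsorted hi' s[i]).mp le_rfl
    omega
  omega

theorem stmt_6 {Ω : Type*} [MeasurableSpace Ω] (P : Measure Ω)
    [IsProbabilityMeasure P] (n : ℕ) (R : Fin (n + 1) → Ω → ℝ)
    (hmeas : ∀ i, Measurable (R i))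
    (hexch : ∀ σ : Equiv.Perm (Fin (n + 1)),
      Measure.map (fun ω (i : Fin (n + 1)) => R (σ i) ω) P =
        Measure.map (fun ω (i : Fin (n + 1)) => R i ω) P)
    (δ : ℝ) (hδ : δ ∈ Set.Ioo (0 : ℝ) 1)
    (k : ℕ) (hk : k = ⌈((n : ℝ) + 1) * (1 - δ)⌉₊) (hkn : k ≤ n)
    (qhat : Ω → ℝ)
    (hq : ∀ ω, qhat ω = kthSmallest (List.ofFn fun i : Fin n => R i.castSucc ω) k) :
    (P {ω | R (Fin.last n) ω ≤ qhat ω}).toReal ≥ 1 - δ := by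
  obtain ⟨hδ0, hδ1⟩ := hδ
  have hkpos : 0 < k := by
    rw [hk]
    exact Nat.ceil_pos.mpr (by nlinarith [Nat.cast_nonneg (α := ℝ) n])
  -- the events
  set S : Fin (n + 1) → Set (Fin (n + 1) → ℝ) := fun j =>
    {x | (List.ofFn x).countP (fun b => decide (b < x j)) < k} with hS
  have hSmeas : ∀ j, MeasurableSet (S j) := by
    intro j
    have hF : Measurable fun x : Fin (n + 1) → ℝ =>
        (List.ofFn x).countP (fun b => decide (b < x j)) := by
      have : (fun x : Fin (n + 1) → ℝ =>
          (List.ofFn x).countP (fun b => decide (b < x j))) =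
          fun x => ∑ i, if x i < x j then (1 : ℕ) else 0 := by
        funext x
        rw [aux_countP_ofFn]
        simp
      rw [this]
      apply Finset.measurable_sum
      intro i _
      exact Measurable.ite
        (measurableSet_lt (measurable_pi_apply i) (measurable_pi_apply j))
        measurable_const measurable_const
    have h := hF (show MeasurableSet (Set.Iio k) from trivial)
    exact h
  set T : Ω → Fin (n + 1) → ℝ := fun ω i => R i ω with hT
  have hTmeas : Measurable T := measurable_pi_lambda _ hmeas
  set A : Fin (n + 1) → Set Ω := fun j => T ⁻¹' S j with hA
  have hAmeas : ∀ j, MeasurableSet (A j) := fun j => hTmeas (hSmeas j)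
  -- exchangeability: all A j have the same probability
  have hsame : ∀ j, P (A j) = P (A (Fin.last n)) := by
    intro j
    set σ : Equiv.Perm (Fin (n + 1)) := Equiv.swap (Fin.last n) j with hσ
    have hTσ : Measurable fun ω (i : Fin (n + 1)) => R (σ i) ω :=
      measurable_pi_lambda _ fun i => hmeas (σ i)
    have h1 : P (A j) = (Measure.map T P) (S j) := by
      rw [Measure.map_apply hTmeas (hSmeas j)]
    have h2 : (Measure.map T P) (S j) =
        (Measure.map (fun ω (i : Fin (n + 1)) => R (σ i) ω) P) (S j) := by
      rw [hexch σ]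
    have h3 : (fun ω (i : Fin (n + 1)) => R (σ i) ω) ⁻¹' S j = A (Fin.last n) := by
      ext ω
      simp only [Set.mem_preimage, hA, hS, Set.mem_setOf_eq, hT]
      have hperm : (List.ofFn ((fun i => R i ω) ∘ σ)).Perm (List.ofFn fun i => R i ω) :=
        σ.ofFn_comp_perm _
      have hcount : ∀ a : ℝ,
          (List.ofFn fun i => R (σ i) ω).countP (fun b => decide (b < a)) =
          (List.ofFn fun i => R i ω).countP (fun b => decide (b < a)) := fun a =>
        hperm.countP_eq _
      rw [hcount]
      have : σ j = Fin.last n := Equiv.swap_apply_right _ _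
      rw [this]
    rw [h1, h2, Measure.map_apply hTσ (hSmeas j), h3]
  -- the target event equals A (last n)
  have hEvent : {ω | R (Fin.last n) ω ≤ qhat ω} = A (Fin.last n) := by
    ext ω
    simp only [Set.mem_setOf_eq, hA, hS, Set.mem_preimage, Set.mem_setOf_eq, hT]
    rw [hq ω]
    set l : List ℝ := List.ofFn fun i : Fin n => R i.castSucc ω with hl
    set s : List ℝ := l.insertionSort (· ≤ ·) with hs
    have hslen : s.length = n := by rw [hs, List.length_insertionSort, hl, List.length_ofFn]
    have hk1 : k - 1 < s.length := by omega
    have hkth : kthSmallest l k = s[k - 1] := List.getD_eq_getElem _ _ hk1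
    have hiff := aux_sorted_le_iff (l.pairwise_insertionSort (· ≤ ·)) hk1 (R (Fin.last n) ω)
    have hcnt : (List.ofFn fun i => R i ω).countP
        (fun b => decide (b < R (Fin.last n) ω)) =
        s.countP (fun b => decide (b < R (Fin.last n) ω)) := by
      rw [(l.perm_insertionSort (· ≤ ·)).countP_eq]
      rw [List.ofFn_succ']
      simp [List.concat_eq_append, List.countP_append, hl, Function.comp]
    rw [hkth, hiff, hcnt]
    rw [hs]
    omega
  -- sum of probabilities is at least k
  have hsum : (k : ℝ≥0∞) ≤ ∑ j : Fin (n + 1), P (A j) := by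
    have h1 : ∑ j : Fin (n + 1), P (A j) =
        ∫⁻ ω, ∑ j : Fin (n + 1), (A j).indicator (fun _ => (1 : ℝ≥0∞)) ω ∂P := by
      rw [lintegral_finset_sum _ fun j _ =>
        (measurable_const (a := (1 : ℝ≥0∞))).indicator (hAmeas j)]
      congr 1
      ext j
      rw [lintegral_indicator_const (hAmeas j), one_mul]
    rw [h1]
    have h2 : ∀ ω, (k : ℝ≥0∞) ≤
        ∑ j : Fin (n + 1), (A j).indicator (fun _ => (1 : ℝ≥0∞)) ω := by
      intro ω
      have hkey := aux_key_count (List.ofFn fun i => R i ω) k hkpos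
        (by rw [List.length_ofFn]; omega)
      rw [aux_countP_ofFn] at hkey
      have : ∑ j : Fin (n + 1), (A j).indicator (fun _ => (1 : ℝ≥0∞)) ω =
          ((∑ j : Fin (n + 1), if (List.ofFn fun i => R i ω).countP
            (fun b => decide (b < R j ω)) < k then (1 : ℕ) else 0 : ℕ) : ℝ≥0∞) := by
        push_cast
        congr 1
        ext j
        by_cases hj : ω ∈ A j
        · have : (List.ofFn fun i => R i ω).countP
              (fun b => decide (b < R j ω)) < k := hj
          rw [Set.indicator_of_mem hj, if_pos this]
        · have : ¬ (List.ofFn fun i => R i ω).countP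
              (fun b => decide (b < R j ω)) < k := hj
          rw [Set.indicator_of_notMem hj, if_neg this]
      rw [this]
      simp only [decide_eq_true_eq] at hkey
      exact_mod_cast hkey
    calc (k : ℝ≥0∞) = ∫⁻ _, (k : ℝ≥0∞) ∂P := by simp
      _ ≤ _ := lintegral_mono h2
  -- hence (n+1) * P(E) ≥ k
  have hconst : ∑ j : Fin (n + 1), P (A j) = (n + 1 : ℕ) * P (A (Fin.last n)) := by
    rw [Finset.sum_congr rfl fun j _ => hsame j]
    simp [mul_comm]
  rw [hconst] at hsum
  have hfin : P (A (Fin.last n)) ≠ ⊤ := measure_ne_top _ _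
  have hreal : (k : ℝ) ≤ (n + 1 : ℕ) * (P (A (Fin.last n))).toReal := by
    have := ENNReal.toReal_mono (by finiteness) hsum
    rw [ENNReal.toReal_mul, ENNReal.toReal_natCast] at this
    simpa [ENNReal.toReal_add] using this
  have hceil : ((n : ℝ) + 1) * (1 - δ) ≤ k := by
    rw [hk]
    exact Nat.le_ceil _
  rw [hEvent]
  have hn1 : (0 : ℝ) < (n + 1 : ℕ) := by positivity
  have : ((n : ℝ) + 1) * (1 - δ) ≤ (n + 1 : ℕ) * (P (A (Fin.last n))).toReal :=
    le_trans hceil hreal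
  push_cast at this
  nlinarith [this]
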